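/- For every positive integer n, B_{2n} = (2n / (2^(2n) * (2^(2n) - 1))) * sum over k from 0 to n-1 of binomial(2n-1, 2k) * E_{2k}, where B_{2n} is the (2n)-th Bernoulli number and E_{2k} is the (2k)-th Euler number. -/

import Mathlib

/-- The Euler numbers, defined via the generating function `1 / cosh t = ∑ Eₙ tⁿ / n!`,
i.e. as derivatives of `1 / cosh` at `0`. -/
noncomputable def eulerNumber (n : ℕ) : ℝ :=
  iteratedDeriv n (fun t : ℝ => 1 / Real.cosh t) 0

open Finset PowerSeries
open scoped ContDiff


theorem my_iteratedDeriv_add {f g : ℝ → ℝ} {n : ℕ} (hf : ContDiff ℝ n f) (hg : ContDiff ℝ n g)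
    (x : ℝ) :
    iteratedDeriv n (fun y => f y + g y) x = iteratedDeriv n f x + iteratedDeriv n g x := by
  have := iteratedDerivWithin_add (Set.mem_univ x) uniqueDiffOn_univ
    (f := f) (g := g) (n := n) (hf.contDiffWithinAt) (hg.contDiffWithinAt)
  simp only [iteratedDerivWithin_univ] at this
  exact this

lemma pascal_sum (F G : ℕ → ℝ) (n : ℕ) :
    ∑ k ∈ range (n + 1), (n.choose k : ℝ) * F (k + 1) * G (n - k)
      + ∑ k ∈ range (n + 1), (n.choose k : ℝ) * F k * G (n - k + 1)
    = ∑ k ∈ range (n + 2), ((n + 1).choose k : ℝ) * F k * G (n + 1 - k) := by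
  rw [Finset.sum_range_succ' (fun k => ((n + 1).choose k : ℝ) * F k * G (n + 1 - k)) (n + 1)]
  simp only [Nat.succ_sub_succ, Nat.choose_zero_right, Nat.cast_one, one_mul, Nat.sub_zero]
  have hpascal : ∀ k, ((n + 1).choose (k + 1) : ℝ) = n.choose k + n.choose (k + 1) := by
    intro k; exact_mod_cast congrArg (Nat.cast (R := ℝ)) (Nat.choose_succ_succ n k)
  have : ∑ k ∈ range (n + 1), ((n + 1).choose (k + 1) : ℝ) * F (k + 1) * G (n - k)
      = ∑ k ∈ range (n + 1), (n.choose k : ℝ) * F (k + 1) * G (n - k)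
        + ∑ k ∈ range (n + 1), (n.choose (k + 1) : ℝ) * F (k + 1) * G (n - k) := by
    rw [← Finset.sum_add_distrib]
    refine Finset.sum_congr rfl fun k _ => by rw [hpascal]; ring
  rw [this]
  have h2 : ∑ k ∈ range (n + 1), (n.choose (k + 1) : ℝ) * F (k + 1) * G (n - k)
      = ∑ k ∈ range n, (n.choose (k + 1) : ℝ) * F (k + 1) * G (n - (k + 1) + 1) := by
    rw [Finset.sum_range_succ]
    simp only [Nat.choose_succ_self, Nat.cast_zero, zero_mul, add_zero]
    refine Finset.sum_congr rfl fun k hk => ?_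
    have : n - (k + 1) + 1 = n - k := by
      have := Finset.mem_range.mp hk; omega
    rw [this]
  have h3 : ∑ k ∈ range (n + 1), (n.choose k : ℝ) * F k * G (n - k + 1)
      = ∑ k ∈ range n, (n.choose (k + 1) : ℝ) * F (k + 1) * G (n - (k + 1) + 1)
        + (n.choose 0 : ℝ) * F 0 * G (n - 0 + 1) :=
    Finset.sum_range_succ' _ n
  rw [h2, h3]
  simp only [Nat.choose_zero_right, Nat.cast_one, one_mul, Nat.sub_zero]
  ring

theorem my_iteratedDeriv_mul (n : ℕ) :
    ∀ (f g : ℝ → ℝ), ContDiff ℝ ∞ f → ContDiff ℝ ∞ g → ∀ x : ℝ,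
    iteratedDeriv n (fun y => f y * g y) x =
      ∑ k ∈ range (n + 1),
        (n.choose k : ℝ) * iteratedDeriv k f x * iteratedDeriv (n - k) g x := by
  induction n with
  | zero => intro f g _ _ x; simp
  | succ n ih =>
    intro f g hf hg x
    have hf' : ContDiff ℝ ∞ (deriv f) := (contDiff_infty_iff_deriv.mp hf).2
    have hg' : ContDiff ℝ ∞ (deriv g) := (contDiff_infty_iff_deriv.mp hg).2
    have hder : deriv (fun y => f y * g y) = fun y => deriv f y * g y + f y * deriv g y := by
      funext y
      exact deriv_mul (hf.differentiable (by norm_num) y) (hg.differentiable (by norm_num) y)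
    rw [iteratedDeriv_succ', hder]
    have hA : ContDiff ℝ n fun y => deriv f y * g y :=
      (hf'.mul hg).of_le (by exact_mod_cast le_top)
    have hB : ContDiff ℝ n fun y => f y * deriv g y :=
      (hf.mul hg').of_le (by exact_mod_cast le_top)
    rw [my_iteratedDeriv_add hA hB x, ih (deriv f) g hf' hg x, ih f (deriv g) hf hg' x]
    simp_rw [← iteratedDeriv_succ']
    exact pascal_sum (fun k => iteratedDeriv k f x) (fun k => iteratedDeriv k g x) n

lemma iteratedDeriv_cosh (n : ℕ) :
    iteratedDeriv n Real.cosh = if Even n then Real.cosh else Real.sinh := by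
  induction n with
  | zero => simp
  | succ n ih =>
    rw [iteratedDeriv_succ, ih]
    by_cases h : Even n
    · simp [h, Nat.even_add_one, Real.deriv_cosh]
    · simp [h, Nat.even_add_one, Real.deriv_sinh]

lemma contDiff_sech : ContDiff ℝ ∞ (fun t : ℝ => 1 / Real.cosh t) :=
  contDiff_const.div Real.contDiff_cosh (fun x => (Real.cosh_pos x).ne')


lemma iter_zero : ∀ n : ℕ, iteratedDeriv n (fun _ : ℝ => (0 : ℝ)) = fun _ => 0 := by
  intro n
  induction n with
  | zero => funext x; simp
  | succ m ih => rw [iteratedDeriv_succ', deriv_const']; exact ih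

/-- Recurrence for the Euler numbers, from `(1/cosh) * cosh = 1`. -/
lemma euler_recurrence (n : ℕ) :
    ∑ k ∈ range (n + 1), (n.choose k : ℝ) * eulerNumber k
        * (if Even (n - k) then 1 else 0) = if n = 0 then 1 else 0 := by
  have hone : (fun y : ℝ => (1 / Real.cosh y) * Real.cosh y) = fun _ => (1 : ℝ) := by
    funext y; field_simp
  have hconst : iteratedDeriv n (fun _ : ℝ => (1 : ℝ)) 0 = if n = 0 then 1 else 0 := by
    cases n with
    | zero => simp
    | succ m =>
      rw [iteratedDeriv_succ', deriv_const']
      rw [iter_zero]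
      simp
  have := my_iteratedDeriv_mul n (fun t => 1 / Real.cosh t) Real.cosh contDiff_sech
    Real.contDiff_cosh 0
  rw [hone, hconst] at this
  rw [this]
  refine Finset.sum_congr rfl fun k _ => ?_
  rw [iteratedDeriv_cosh]
  by_cases h : Even (n - k) <;> simp [h, eulerNumber, Real.cosh_zero, Real.sinh_zero]

/-- The formal power series of cosh. -/
noncomputable def coshPS : PowerSeries ℝ :=
  PowerSeries.mk fun n => if Even n then ((n.factorial : ℝ))⁻¹ else 0

lemma constantCoeff_coshPS : constantCoeff coshPS = 1 := by
  simp [coshPS, ← coeff_zero_eq_constantCoeff_apply, coeff_mk]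

/-- Recurrence for the coefficients of `coshPS⁻¹`. -/
lemma coeff_inv_recurrence (n : ℕ) :
    ∑ k ∈ range (n + 1), (n.choose k : ℝ) * ((k.factorial : ℝ) * coeff k coshPS⁻¹)
        * (if Even (n - k) then 1 else 0) = if n = 0 then 1 else 0 := by
  have h := PowerSeries.inv_mul_cancel (k := ℝ) coshPS (by rw [constantCoeff_coshPS]; norm_num)
  have h2 := congrArg (coeff n) h
  rw [PowerSeries.coeff_mul, Finset.Nat.sum_antidiagonal_eq_sum_range_succ_mk] at h2
  simp only [coshPS, coeff_mk, coeff_one] at h2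
  have key : ∀ k ∈ range (n + 1),
      (n.choose k : ℝ) * ((k.factorial : ℝ) * coeff k coshPS⁻¹)
          * (if Even (n - k) then 1 else 0)
        = (n.factorial : ℝ) * (coeff k coshPS⁻¹
          * (if Even (n - k) then ((n - k).factorial : ℝ)⁻¹ else 0)) := by
    intro k hk
    have hkn : k ≤ n := Nat.lt_succ_iff.mp (Finset.mem_range.mp hk)
    have hfac : (n.choose k : ℝ) * k.factorial * (n - k).factorial = n.factorial := by
      exact_mod_cast congrArg (Nat.cast (R := ℝ)) (Nat.choose_mul_factorial_mul_factorial hkn)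
    have hne : ((n - k).factorial : ℝ) ≠ 0 := Nat.cast_ne_zero.mpr (Nat.factorial_ne_zero _)
    by_cases hE : Even (n - k) <;> simp only [hE, if_true, if_false, mul_one, mul_zero]
    · field_simp
      linear_combination coeff k coshPS⁻¹ * hfac
  rw [Finset.sum_congr rfl key, ← Finset.mul_sum]
  have h2' : ∑ k ∈ range (n + 1), (coeff k coshPS⁻¹
      * (if Even (n - k) then ((n - k).factorial : ℝ)⁻¹ else 0)) = if n = 0 then 1 else 0 := by
    rw [← h2]
    refine Finset.sum_congr rfl fun k _ => ?_
    congr 1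
  rw [h2']
  by_cases hn : n = 0 <;> simp [hn]

lemma eulerNumber_eq_coeff (n : ℕ) :
    eulerNumber n = (n.factorial : ℝ) * coeff n coshPS⁻¹ := by
  induction n using Nat.strong_induction_on with
  | _ n ih =>
    have h1 := euler_recurrence n
    have h2 := coeff_inv_recurrence n
    rw [Finset.sum_range_succ] at h1 h2
    simp only [Nat.choose_self, Nat.cast_one, one_mul, Nat.sub_self, if_pos (Even.zero)] at h1 h2
    have hsum : ∑ k ∈ range n, (n.choose k : ℝ) * eulerNumber k * (if Even (n - k) then 1 else 0)
        = ∑ k ∈ range n, (n.choose k : ℝ) * ((k.factorial : ℝ) * coeff k coshPS⁻¹)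
            * (if Even (n - k) then 1 else 0) := by
      refine Finset.sum_congr rfl fun k hk => ?_
      rw [ih k (Finset.mem_range.mp hk)]
    rw [hsum] at h1
    rw [mul_one] at h1 h2
    linarith


lemma two_mul_coshPS :
    (2 : ℝ⟦X⟧) * coshPS = exp ℝ + rescale (-1 : ℝ) (exp ℝ) := by
  have h2 : (2 : ℝ⟦X⟧) = C 2 := by simp [map_ofNat]
  ext n
  rw [h2, map_add, coeff_C_mul, coeff_rescale, coeff_exp]
  simp only [coshPS, coeff_mk]
  have hfac : algebraMap ℚ ℝ (1 / n.factorial) = ((n.factorial : ℝ))⁻¹ := by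
    rw [eq_ratCast]
    push_cast
    rw [one_div]
  rw [hfac]
  rcases Nat.even_or_odd n with h | h
  · rw [if_pos h, h.neg_one_pow]; ring
  · rw [if_neg (Nat.not_even_iff_odd.mpr h), h.neg_one_pow]; ring

lemma exp_sq : (exp ℝ) ^ 2 = rescale (2 : ℝ) (exp ℝ) := by
  have := exp_pow_eq_rescale_exp (A := ℝ) 2
  simpa using this

lemma key_identity :
    X * exp ℝ =
      (rescale (4 : ℝ) (bernoulliPowerSeries ℝ) - rescale (2 : ℝ) (bernoulliPowerSeries ℝ)
        + 2 * X) * coshPS := by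
  set B := bernoulliPowerSeries ℝ with hBdef
  set e := exp ℝ with hedef
  have hB : B * (e - 1) = X := bernoulliPowerSeries_mul_exp_sub_one ℝ
  have hr2 : rescale (2 : ℝ) B * (e ^ 2 - 1) = 2 * X := by
    have h := congrArg (rescale (2 : ℝ)) hB
    rw [map_mul, map_sub, map_one, rescale_X] at h
    rw [exp_sq, ← hedef] at *
    rw [h]
    simp [map_ofNat]
  have hr4 : rescale (4 : ℝ) B * (e ^ 4 - 1) = 4 * X := by
    have h := congrArg (rescale (4 : ℝ)) hB
    rw [map_mul, map_sub, map_one, rescale_X] at h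
    have he4 : e ^ 4 = rescale (4 : ℝ) e := by
      have := exp_pow_eq_rescale_exp (A := ℝ) 4
      simpa using this
    rw [he4, h]
    simp [map_ofNat]
  have hcancel : e ^ 2 - 1 ≠ 0 := by
    intro hcon
    have := congrArg (coeff 1) hcon
    rw [exp_sq] at this
    simp [coeff_rescale, coeff_exp] at this
  have hA : rescale (4 : ℝ) B * (e ^ 2 + 1) = 2 * rescale (2 : ℝ) B := by
    apply mul_right_cancel₀ hcancel
    linear_combination hr4 - 2 * hr2
  have hinv : e * rescale (-1 : ℝ) e = 1 := by
    have := exp_mul_exp_neg_eq_one (A := ℝ)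
    simpa [evalNegHom] using this
  have hne : (2 : ℝ⟦X⟧) * e ≠ 0 := by
    intro hcon
    have := congrArg (constantCoeff) hcon
    rw [map_mul] at this
    simp [hedef, map_ofNat] at this
  apply mul_left_cancel₀ hne
  have h2C := two_mul_coshPS
  linear_combination (-(e * (rescale (4 : ℝ) B - rescale (2 : ℝ) B + 2 * X))) * h2C
    - (rescale (4 : ℝ) B - rescale (2 : ℝ) B + 2 * X) * hinv - hA + hr2

lemma coeff_exp_mul_inv (n : ℕ) (hn : 0 < n) :
    coeff (2 * n - 1) (exp ℝ * coshPS⁻¹)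
      = ((4 : ℝ) ^ (2 * n) - 2 ^ (2 * n)) * (bernoulli (2 * n) : ℝ)
          / ((2 * n).factorial : ℝ) := by
  have hC0 : constantCoeff coshPS ≠ 0 := by rw [constantCoeff_coshPS]; norm_num
  have hmain : X * (exp ℝ * coshPS⁻¹)
      = rescale (4 : ℝ) (bernoulliPowerSeries ℝ) - rescale (2 : ℝ) (bernoulliPowerSeries ℝ)
          + 2 * X := by
    rw [← mul_assoc, key_identity, mul_assoc, PowerSeries.mul_inv_cancel _ hC0, mul_one]
  have h := congrArg (coeff (2 * n)) hmain
  rw [show 2 * n = (2 * n - 1) + 1 by omega, coeff_succ_X_mul] at h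
  rw [h]
  have hX : coeff ((2 * n - 1) + 1) ((2 : ℝ⟦X⟧) * X) = 0 := by
    rw [show (2 : ℝ⟦X⟧) = C 2 by simp [map_ofNat], coeff_C_mul, coeff_X]
    rw [if_neg (by omega)]
    ring
  rw [map_add, map_sub, hX, coeff_rescale, coeff_rescale, add_zero]
  have hcoeffB : ∀ m : ℕ, coeff m (bernoulliPowerSeries ℝ)
      = (bernoulli m : ℝ) / (m.factorial : ℝ) := by
    intro m
    rw [bernoulliPowerSeries, coeff_mk, eq_ratCast]
    push_cast
    ring
  rw [hcoeffB]
  rw [show (2 * n - 1) + 1 = 2 * n by omega]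
  ring

lemma hC0 : constantCoeff coshPS ≠ 0 := by rw [constantCoeff_coshPS]; norm_num

lemma rescale_neg_one_coshPS : rescale (-1 : ℝ) coshPS = coshPS := by
  ext n
  rw [coeff_rescale]
  simp only [coshPS, coeff_mk]
  rcases Nat.even_or_odd n with h | h
  · rw [if_pos h, h.neg_one_pow, one_mul]
  · rw [if_neg (Nat.not_even_iff_odd.mpr h), mul_zero]

lemma coeff_inv_odd (k : ℕ) (hk : Odd k) : coeff k coshPS⁻¹ = 0 := by
  have h1 : rescale (-1 : ℝ) coshPS⁻¹ * coshPS = 1 := by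
    calc rescale (-1 : ℝ) coshPS⁻¹ * coshPS
        = rescale (-1 : ℝ) coshPS⁻¹ * rescale (-1 : ℝ) coshPS := by
          rw [rescale_neg_one_coshPS]
      _ = rescale (-1 : ℝ) (coshPS⁻¹ * coshPS) := (map_mul _ _ _).symm
      _ = 1 := by rw [PowerSeries.inv_mul_cancel _ hC0, map_one]
  have h2 : rescale (-1 : ℝ) coshPS⁻¹ = coshPS⁻¹ :=
    (PowerSeries.eq_inv_iff_mul_eq_one hC0).mpr h1
  have h3 := congrArg (coeff k) h2
  rw [coeff_rescale, hk.neg_one_pow, neg_one_mul] at h3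
  linarith

lemma sum_range_two_mul (f : ℕ → ℝ) (n : ℕ) :
    ∑ i ∈ range (2 * n), f i
      = ∑ k ∈ range n, f (2 * k) + ∑ k ∈ range n, f (2 * k + 1) := by
  induction n with
  | zero => simp
  | succ m ih =>
    rw [show 2 * (m + 1) = 2 * m + 1 + 1 by ring, sum_range_succ, sum_range_succ, ih,
      sum_range_succ, sum_range_succ]
    ring

lemma sum_euler_eq (n : ℕ) (hn : 0 < n) :
    ∑ k ∈ Finset.range n, (Nat.choose (2 * n - 1) (2 * k) : ℝ) * eulerNumber (2 * k)
      = ((2 * n - 1).factorial : ℝ) * coeff (2 * n - 1) (exp ℝ * coshPS⁻¹) := by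
  set m := 2 * n - 1 with hm
  have h1 : coeff m (exp ℝ * coshPS⁻¹)
      = ∑ j ∈ range (m + 1), coeff j coshPS⁻¹ * algebraMap ℚ ℝ (1 / (m - j).factorial) := by
    rw [mul_comm, coeff_mul, Finset.Nat.sum_antidiagonal_eq_sum_range_succ_mk]
    exact Finset.sum_congr rfl fun j _ => by rw [coeff_exp]
  rw [h1, Finset.mul_sum]
  have h2 : ∀ j ∈ range (m + 1),
      ((m.factorial : ℝ)) * (coeff j coshPS⁻¹ * algebraMap ℚ ℝ (1 / (m - j).factorial))
        = (m.choose j : ℝ) * ((j.factorial : ℝ) * coeff j coshPS⁻¹) := by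
    intro j hj
    have hjm : j ≤ m := Nat.lt_succ_iff.mp (Finset.mem_range.mp hj)
    have hfac : (m.choose j : ℝ) * j.factorial * (m - j).factorial = m.factorial := by
      exact_mod_cast congrArg (Nat.cast (R := ℝ)) (Nat.choose_mul_factorial_mul_factorial hjm)
    have hne : ((m - j).factorial : ℝ) ≠ 0 := Nat.cast_ne_zero.mpr (Nat.factorial_ne_zero _)
    rw [eq_ratCast]
    push_cast
    field_simp
    linear_combination (-(coeff j coshPS⁻¹)) * hfac
  rw [Finset.sum_congr rfl h2, show m + 1 = 2 * n by omega, sum_range_two_mul]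
  have hodd : ∑ k ∈ range n,
      (m.choose (2 * k + 1) : ℝ) * (((2 * k + 1).factorial : ℝ) * coeff (2 * k + 1) coshPS⁻¹)
      = 0 := by
    refine Finset.sum_eq_zero fun k _ => ?_
    rw [coeff_inv_odd (2 * k + 1) ⟨k, by omega⟩]
    ring
  rw [hodd, add_zero]
  exact Finset.sum_congr rfl fun k _ => by rw [eulerNumber_eq_coeff]

theorem bernoulli_eq_sum_euler (n : ℕ) (hn : 0 < n) :
    (bernoulli (2 * n) : ℝ) =
      (2 * n / (2 ^ (2 * n) * (2 ^ (2 * n) - 1))) *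
        ∑ k ∈ Finset.range n, (Nat.choose (2 * n - 1) (2 * k) : ℝ) * eulerNumber (2 * k) := by
  rw [sum_euler_eq n hn, coeff_exp_mul_inv n hn]
  have h4 : (4 : ℝ) ^ (2 * n) = 2 ^ (2 * n) * 2 ^ (2 * n) := by
    rw [show (4 : ℝ) = 2 * 2 by norm_num, mul_pow]
  have hnat := Nat.mul_factorial_pred (show 2 * n ≠ 0 by omega)
  have hfact : ((2 * n).factorial : ℝ) = (2 * (n : ℝ)) * ((2 * n - 1).factorial : ℝ) := by
    rw [← hnat]
    push_cast
    ring
  have hpow_ne : (2 : ℝ) ^ (2 * n) ≠ 0 := by positivity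
  have hpow1 : (1 : ℝ) < 2 ^ (2 * n) := by
    apply one_lt_pow₀ (by norm_num : (1:ℝ) < 2) (by omega)
  have hsub_ne : (2 : ℝ) ^ (2 * n) - 1 ≠ 0 := by linarith
  have hfac_ne : (((2 * n - 1).factorial : ℕ) : ℝ) ≠ 0 :=
    Nat.cast_ne_zero.mpr (Nat.factorial_ne_zero _)
  have hn_ne : (n : ℝ) ≠ 0 := Nat.cast_ne_zero.mpr hn.ne'
  rw [h4] at *
  field_simp
  rw [hfact]
  ring
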